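/- Let G = (V,E) be a finite simple undirected graph. Then ν₂(G) = τ₂(G) = |V| - ν̂_G, i.e., the maximum size of a 2-matching of G equals the minimum size of a 2-vertex cover of G, and both equal |V| minus the weak vulnerability ν̂_G of G; moreover |V| - ν̂_G = min over independent sets S ⊆ V of (|V| - |S| + |N(S)|). -/
import Mathlib


open Finset

variable {V : Type*}

/-- `N(T)`: the set of vertices adjacent to at least one vertex of `T`. -/
def nbhd [Fintype V] [DecidableEq V] (G : SimpleGraph V) [DecidableRel G.Adj]
    (T : Finset V) : Finset V :=
  Finset.univ.filter fun j => ∃ i ∈ T, G.Adj i j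

/-- The vulnerability function `v_G(T) = |T| - |N(T)|`. -/
def vuln [Fintype V] [DecidableEq V] (G : SimpleGraph V) [DecidableRel G.Adj]
    (T : Finset V) : ℤ :=
  (T.card : ℤ) - ((nbhd G T).card : ℤ)

/-- `S` is an independent set of `G`. -/
def IsIndepF (G : SimpleGraph V) (S : Finset V) : Prop :=
  ∀ i ∈ S, ∀ j ∈ S, ¬ G.Adj i j

/-- `w` is a 2-matching of `H`: weights `0`, `1` or `2` on the edges such that for every vertex
the sum of the weights of the incident edges is at most 2. -/
def IsTwoMatching {W : Type*} (H : SimpleGraph W) (w : Sym2 W → ℕ) : Prop :=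
  (∀ e ∈ H.edgeSet, w e ≤ 2) ∧ ∀ v : W, ∑ᶠ e ∈ H.incidenceSet v, w e ≤ 2

/-- `u` is a 2-vertex cover of `H`: weights `0`, `1` or `2` on the vertices such that for every
edge the sum of the weights of its endpoints is at least 2. -/
def IsTwoVertexCover {W : Type*} (H : SimpleGraph W) (u : W → ℕ) : Prop :=
  (∀ i, u i ≤ 2) ∧ ∀ i j, H.Adj i j → 2 ≤ u i + u j

set_option linter.unusedSectionVars false

section helpers
variable [Fintype V] [DecidableEq V] (G : SimpleGraph V) [DecidableRel G.Adj]

lemma mem_nbhd {T : Finset V} {j : V} : j ∈ nbhd G T ↔ ∃ i ∈ T, G.Adj i j := by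
  simp [nbhd]

lemma nbhd_empty : nbhd G (∅ : Finset V) = ∅ := by
  ext j; simp [nbhd]

lemma finsum_edge (w : Sym2 V → ℕ) :
    ∑ᶠ e ∈ G.edgeSet, w e = ∑ e ∈ G.edgeFinset, w e := by
  rw [← SimpleGraph.coe_edgeFinset, finsum_mem_coe_finset]

lemma finsum_inc (w : Sym2 V → ℕ) (v : V) :
    ∑ᶠ e ∈ G.incidenceSet v, w e
      = ∑ e ∈ G.edgeFinset.filter (fun e => v ∈ e), w e := by
  have h : (↑(G.incidenceFinset v) : Set (Sym2 V)) = G.incidenceSet v :=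
    Set.coe_toFinset _
  rw [← h, finsum_mem_coe_finset, SimpleGraph.incidenceFinset_eq_filter]

lemma sum_inc_eq (w : Sym2 V → ℕ) (U : Finset V) :
    ∑ v ∈ U, ∑ e ∈ G.edgeFinset.filter (fun e => v ∈ e), w e
      = ∑ e ∈ G.edgeFinset, w e * (U.filter (fun v => v ∈ e)).card := by
  simp_rw [Finset.sum_filter]
  rw [Finset.sum_comm]
  refine Finset.sum_congr rfl fun e _ => ?_
  rw [← Finset.sum_filter, Finset.sum_const, smul_eq_mul, mul_comm]

lemma count_pair (U : Finset V) {a b : V} (hab : a ≠ b) :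
    (U.filter (fun v => v ∈ (s(a,b) : Sym2 V))).card
      = (if a ∈ U then 1 else 0) + (if b ∈ U then 1 else 0) := by
  have h : U.filter (fun v => v ∈ (s(a,b) : Sym2 V)) = U ∩ {a, b} := by
    ext v
    simp [Sym2.mem_iff, Finset.mem_inter]
  rw [h]
  by_cases ha : a ∈ U <;> by_cases hb : b ∈ U <;>
    simp [Finset.inter_comm, Finset.insert_inter_of_mem, Finset.insert_inter_of_notMem,
      Finset.singleton_inter_of_mem, Finset.singleton_inter_of_notMem, ha, hb, hab,
      Finset.card_insert_of_notMem]

lemma inc_le_two {w : Sym2 V → ℕ} (hw : IsTwoMatching G w) (v : V) :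
    ∑ e ∈ G.edgeFinset.filter (fun e => v ∈ e), w e ≤ 2 := by
  rw [← finsum_inc]; exact hw.2 v

lemma matching_le {w : Sym2 V → ℕ} (hw : IsTwoMatching G w) (T : Finset V) :
    ((∑ e ∈ G.edgeFinset, w e : ℕ) : ℤ) ≤ (Fintype.card V : ℤ) - vuln G T := by
  set A := nbhd G T with hA
  -- key inequality on vertex sums over T vs A
  have hTA : ∑ v ∈ T, ∑ e ∈ G.edgeFinset.filter (fun e => v ∈ e), w e
      ≤ ∑ v ∈ A, ∑ e ∈ G.edgeFinset.filter (fun e => v ∈ e), w e := by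
    rw [sum_inc_eq, sum_inc_eq]
    refine Finset.sum_le_sum fun e he => ?_
    refine Nat.mul_le_mul_left _ ?_
    induction e with
    | h a b =>
      have hadj : G.Adj a b := (SimpleGraph.mem_edgeFinset).1 he
      have hab : a ≠ b := hadj.ne
      rw [count_pair _ hab, count_pair _ hab]
      have h1 : a ∈ T → b ∈ A := fun h => (mem_nbhd G).2 ⟨a, h, hadj⟩
      have h2 : b ∈ T → a ∈ A := fun h => (mem_nbhd G).2 ⟨b, h, hadj.symm⟩
      by_cases ha : a ∈ T <;> by_cases hb : b ∈ T <;>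
        simp_all <;> split_ifs <;> omega
  have hsplit : ∑ v ∈ (univ : Finset V) \ T, (∑ e ∈ G.edgeFinset.filter (fun e => v ∈ e), w e)
      + ∑ v ∈ T, (∑ e ∈ G.edgeFinset.filter (fun e => v ∈ e), w e)
      = ∑ v ∈ (univ : Finset V), ∑ e ∈ G.edgeFinset.filter (fun e => v ∈ e), w e :=
    Finset.sum_sdiff (Finset.subset_univ T)
  have hhs : ∑ v ∈ (univ : Finset V), ∑ e ∈ G.edgeFinset.filter (fun e => v ∈ e), w e
      = 2 * ∑ e ∈ G.edgeFinset, w e := by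
    rw [sum_inc_eq]
    rw [Finset.mul_sum]
    refine Finset.sum_congr rfl fun e he => ?_
    induction e with
    | h a b =>
      have hadj : G.Adj a b := (SimpleGraph.mem_edgeFinset).1 he
      rw [count_pair _ hadj.ne]
      simp [mul_comm]
  have hAb : ∑ v ∈ A, (∑ e ∈ G.edgeFinset.filter (fun e => v ∈ e), w e) ≤ 2 * A.card := by
    calc ∑ v ∈ A, (∑ e ∈ G.edgeFinset.filter (fun e => v ∈ e), w e)
        ≤ ∑ _v ∈ A, 2 := Finset.sum_le_sum fun v _ => inc_le_two G hw v
      _ = 2 * A.card := by rw [Finset.sum_const, smul_eq_mul, mul_comm]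
  have hCb : ∑ v ∈ (univ : Finset V) \ T, (∑ e ∈ G.edgeFinset.filter (fun e => v ∈ e), w e)
      ≤ 2 * ((univ : Finset V) \ T).card := by
    calc ∑ v ∈ (univ : Finset V) \ T, (∑ e ∈ G.edgeFinset.filter (fun e => v ∈ e), w e)
        ≤ ∑ _v ∈ (univ : Finset V) \ T, 2 := Finset.sum_le_sum fun v _ => inc_le_two G hw v
      _ = _ := by rw [Finset.sum_const, smul_eq_mul, mul_comm]
  have hcard : ((univ : Finset V) \ T).card = Fintype.card V - T.card := by
    rw [Finset.card_sdiff_of_subset (Finset.subset_univ T), Finset.card_univ]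
  have hTle : T.card ≤ Fintype.card V := by
    rw [← Finset.card_univ]; exact Finset.card_le_card (Finset.subset_univ T)
  have key : 2 * ∑ e ∈ G.edgeFinset, w e
      ≤ 2 * (Fintype.card V - T.card) + 2 * A.card := by
    omega
  have : (∑ e ∈ G.edgeFinset, w e) ≤ (Fintype.card V - T.card) + A.card := by omega
  have hz := (Nat.cast_le (α := ℤ)).2 this
  push_cast [Nat.cast_sub hTle] at hz
  rw [vuln, ← hA]
  omega

lemma sum_pattern (A S : Finset V) (hd : Disjoint A S) :
    (∑ i : V, ((if i ∈ A then 2 else if i ∈ S then 0 else 1 : ℕ) : ℤ))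
      = (Fintype.card V : ℤ) + A.card - S.card := by
  rw [← Finset.sum_sdiff (Finset.subset_univ A)]
  have hSsub : S ⊆ (univ : Finset V) \ A := fun i hi =>
    Finset.mem_sdiff.2 ⟨Finset.mem_univ i, fun hiA => (Finset.disjoint_left.1 hd) hiA hi⟩
  rw [← Finset.sum_sdiff hSsub]
  have e1 : ∑ i ∈ A, ((if i ∈ A then 2 else if i ∈ S then 0 else 1 : ℕ) : ℤ)
      = ∑ _i ∈ A, (2 : ℤ) := Finset.sum_congr rfl fun i hi => by simp [hi]
  have e2 : ∑ i ∈ S, ((if i ∈ A then 2 else if i ∈ S then 0 else 1 : ℕ) : ℤ)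
      = ∑ _i ∈ S, (0 : ℤ) := Finset.sum_congr rfl fun i hi => by
    have hiA : i ∉ A := fun h => (Finset.disjoint_left.1 hd) h hi
    simp [hiA, hi]
  have e3 : ∑ i ∈ ((univ : Finset V) \ A) \ S,
      ((if i ∈ A then 2 else if i ∈ S then 0 else 1 : ℕ) : ℤ)
      = ∑ _i ∈ ((univ : Finset V) \ A) \ S, (1 : ℤ) := Finset.sum_congr rfl fun i hi => by
    rcases Finset.mem_sdiff.1 hi with ⟨hi1, hi2⟩
    rcases Finset.mem_sdiff.1 hi1 with ⟨_, hi3⟩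
    simp [hi2, hi3]
  rw [e1, e2, e3, Finset.sum_const, Finset.sum_const, Finset.sum_const]
  have h1 : A.card ≤ Fintype.card V := by
    rw [← Finset.card_univ]; exact Finset.card_le_card (Finset.subset_univ A)
  have h2 : S.card ≤ Fintype.card V - A.card := by
    have := Finset.card_le_card hSsub
    rwa [Finset.card_sdiff_of_subset (Finset.subset_univ A), Finset.card_univ] at this
  rw [Finset.card_sdiff_of_subset hSsub, Finset.card_sdiff_of_subset (Finset.subset_univ A), Finset.card_univ]
  simp only [nsmul_eq_mul]
  push_cast
  omega

lemma cover_ge {u : V → ℕ} (hu : IsTwoVertexCover G u) {nuHat : ℤ}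
    (hub : ∀ T : Finset V, vuln G T ≤ nuHat) :
    (Fintype.card V : ℤ) - nuHat ≤ ((∑ i, u i : ℕ) : ℤ) := by
  classical
  set S0 : Finset V := univ.filter (fun i => u i = 0) with hS0
  set F2 : Finset V := univ.filter (fun i => u i = 2) with hF2
  have hmem2 : ∀ i : V, i ∈ F2 ↔ u i = 2 := fun i => by
    rw [hF2, Finset.mem_filter]; simp
  have hmem0 : ∀ i : V, i ∈ S0 ↔ u i = 0 := fun i => by
    rw [hS0, Finset.mem_filter]; simp
  have hd : Disjoint F2 S0 := by
    rw [Finset.disjoint_left]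
    intro i hi hi'
    rw [hmem2] at hi; rw [hmem0] at hi'; omega
  have hsub : nbhd G S0 ⊆ F2 := by
    intro j hj
    rcases (mem_nbhd G).1 hj with ⟨i, hi, hadj⟩
    have hi0 : u i = 0 := (hmem0 i).1 hi
    have h1 := hu.2 i j hadj
    have h2 := hu.1 j
    rw [hmem2]; omega
  have hpt : (∑ i : V, ((if i ∈ F2 then 2 else if i ∈ S0 then 0 else 1 : ℕ) : ℤ))
      ≤ ∑ i : V, ((u i : ℕ) : ℤ) := by
    refine Finset.sum_le_sum fun i _ => ?_
    by_cases h2 : i ∈ F2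
    · have := (hmem2 i).1 h2
      simp [h2, this]
    · by_cases h0 : i ∈ S0
      · simp [h2, h0]
      · have : u i ≠ 0 := fun h => h0 ((hmem0 i).2 h)
        simp only [h2, h0, if_false]
        omega
  rw [sum_pattern _ _ hd] at hpt
  have hb := hub S0
  rw [vuln] at hb
  have hcc := (Nat.cast_le (α := ℤ)).2 (Finset.card_le_card hsub)
  have hcast : ((∑ i, u i : ℕ) : ℤ) = ∑ i : V, ((u i : ℕ) : ℤ) := by push_cast; rfl
  rw [hcast]
  omega

lemma cover_exists {S : Finset V} (hS : IsIndepF G S) :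
    ∃ u : V → ℕ, IsTwoVertexCover G u ∧
      ((∑ i, u i : ℕ) : ℤ) = (Fintype.card V : ℤ) - S.card + (nbhd G S).card := by
  classical
  have hd : Disjoint (nbhd G S) S := by
    rw [Finset.disjoint_left]
    intro i hiA hiS
    rcases (mem_nbhd G).1 hiA with ⟨j, hjS, hadj⟩
    exact hS j hjS i hiS hadj
  refine ⟨fun i => if i ∈ nbhd G S then 2 else if i ∈ S then 0 else 1, ⟨fun i => ?_, ?_⟩, ?_⟩
  · show (if i ∈ nbhd G S then 2 else if i ∈ S then 0 else 1) ≤ 2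
    split_ifs <;> omega
  · intro i j hadj
    show 2 ≤ (if i ∈ nbhd G S then 2 else if i ∈ S then 0 else 1)
        + (if j ∈ nbhd G S then 2 else if j ∈ S then 0 else 1)
    have h1 : i ∈ S → j ∈ nbhd G S := fun h => (mem_nbhd G).2 ⟨i, h, hadj⟩
    have h2 : j ∈ S → i ∈ nbhd G S := fun h => (mem_nbhd G).2 ⟨j, h, hadj.symm⟩
    by_cases hiA : i ∈ nbhd G S <;> by_cases hjA : j ∈ nbhd G S <;>
      by_cases hiS : i ∈ S <;> by_cases hjS : j ∈ S <;> simp_all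
  · have hcast : ((∑ i, (if i ∈ nbhd G S then 2 else if i ∈ S then 0 else 1 : ℕ) : ℕ) : ℤ)
        = ∑ i : V, ((if i ∈ nbhd G S then 2 else if i ∈ S then 0 else 1 : ℕ) : ℤ) := by
      push_cast; rfl
    rw [hcast, sum_pattern _ _ hd]; ring

lemma indep_maximizer {nuHat : ℤ} (hmem : ∃ T : Finset V, vuln G T = nuHat)
    (hub : ∀ T : Finset V, vuln G T ≤ nuHat) :
    ∃ S : Finset V, IsIndepF G S ∧ vuln G S = nuHat := by
  classical
  rcases hmem with ⟨T, hT⟩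
  have hind : IsIndepF G (T \ nbhd G T) := by
    intro i hi j hj hadj
    rcases Finset.mem_sdiff.1 hj with ⟨hjT, hjA⟩
    exact hjA ((mem_nbhd G).2 ⟨i, (Finset.mem_sdiff.1 hi).1, hadj⟩)
  refine ⟨T \ nbhd G T, hind, le_antisymm (hub _) ?_⟩
  rw [← hT, vuln, vuln]
  have hcardS : (T ∩ nbhd G T).card + (T \ nbhd G T).card = T.card :=
    Finset.card_inter_add_card_sdiff T (nbhd G T)
  have hdisj : Disjoint (nbhd G (T \ nbhd G T)) (T ∩ nbhd G T) := by
    rw [Finset.disjoint_left]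
    intro v hv hv'
    rcases (mem_nbhd G).1 hv with ⟨s, hsS, hadj⟩
    rcases Finset.mem_sdiff.1 hsS with ⟨hsT, hsA⟩
    exact hsA ((mem_nbhd G).2 ⟨v, (Finset.mem_inter.1 hv').1, hadj.symm⟩)
  have hsub : nbhd G (T \ nbhd G T) ∪ (T ∩ nbhd G T) ⊆ nbhd G T := by
    intro v hv
    rcases Finset.mem_union.1 hv with hv | hv
    · rcases (mem_nbhd G).1 hv with ⟨s, hsS, hadj⟩
      exact (mem_nbhd G).2 ⟨s, (Finset.mem_sdiff.1 hsS).1, hadj⟩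
    · exact (Finset.mem_inter.1 hv).2
  have hcards : (nbhd G (T \ nbhd G T)).card + (T ∩ nbhd G T).card ≤ (nbhd G T).card := by
    rw [← Finset.card_union_of_disjoint hdisj]
    exact Finset.card_le_card hsub
  have h1 := (Nat.cast_le (α := ℤ)).2 hcards
  have h2 : ((T ∩ nbhd G T).card : ℤ) + ((T \ nbhd G T).card : ℤ) = (T.card : ℤ) := by
    exact_mod_cast congrArg (Nat.cast (R := ℤ)) hcardS
  push_cast at h1 h2 ⊢
  omega

lemma matching_exists {nuHat : ℤ} (hnn : 0 ≤ nuHat)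
    (hub : ∀ T : Finset V, vuln G T ≤ nuHat) :
    ∃ w : Sym2 V → ℕ, IsTwoMatching G w ∧
      (Fintype.card V : ℤ) - nuHat ≤ ((∑ e ∈ G.edgeFinset, w e : ℕ) : ℤ) := by
  classical
  set d := nuHat.toNat with hd
  have hdz : (d : ℤ) = nuHat := Int.toNat_of_nonneg hnn
  set t : V → Finset (V ⊕ Fin d) := fun i =>
    (G.neighborFinset i).map (Function.Embedding.inl)
      ∪ (univ : Finset (Fin d)).map (Function.Embedding.inr) with ht
  have hall : ∀ s : Finset V, s.card ≤ (s.biUnion t).card := by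
    intro s
    rcases s.eq_empty_or_nonempty with rfl | ⟨i0, hi0⟩
    · simp
    · have hsub : (nbhd G s).map (Function.Embedding.inl)
          ∪ (univ : Finset (Fin d)).map (Function.Embedding.inr) ⊆ s.biUnion t := by
        intro x hx
        rcases Finset.mem_union.1 hx with hx | hx
        · rcases Finset.mem_map.1 hx with ⟨j, hj, rfl⟩
          rcases (mem_nbhd G).1 hj with ⟨i, hi, hadj⟩
          exact Finset.mem_biUnion.2 ⟨i, hi, by
            rw [ht]
            exact Finset.mem_union_left _
              (Finset.mem_map.2 ⟨j, by simpa using hadj, rfl⟩)⟩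
        · rcases Finset.mem_map.1 hx with ⟨x0, _, rfl⟩
          exact Finset.mem_biUnion.2 ⟨i0, hi0, by
            rw [ht]
            exact Finset.mem_union_right _ (Finset.mem_map.2 ⟨x0, Finset.mem_univ _, rfl⟩)⟩
      have hdisj : Disjoint ((nbhd G s).map (Function.Embedding.inl : V ↪ V ⊕ Fin d))
          ((univ : Finset (Fin d)).map (Function.Embedding.inr)) := by
        rw [Finset.disjoint_left]
        rintro x hx hx'
        rcases Finset.mem_map.1 hx with ⟨j, _, rfl⟩
        rcases Finset.mem_map.1 hx' with ⟨x0, _, h⟩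
        simp at h
      have hcard : ((nbhd G s).map (Function.Embedding.inl : V ↪ V ⊕ Fin d)
          ∪ (univ : Finset (Fin d)).map (Function.Embedding.inr)).card
          = (nbhd G s).card + d := by
        rw [Finset.card_union_of_disjoint hdisj, Finset.card_map, Finset.card_map,
          Finset.card_univ, Fintype.card_fin]
      have hv := hub s
      rw [vuln] at hv
      have hle : s.card ≤ (nbhd G s).card + d := by omega
      calc s.card ≤ (nbhd G s).card + d := hle
        _ = _ := hcard.symm
        _ ≤ (s.biUnion t).card := Finset.card_le_card hsub
  obtain ⟨f, hfinj, hf⟩ := (Finset.all_card_le_biUnion_card_iff_exists_injective t).1 hall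
  set g : V → V := fun i => Sum.elim id (fun _ => i) (f i) with hg
  set D : Finset V := univ.filter (fun i => (f i).isLeft) with hD
  have hDadj : ∀ i ∈ D, f i = Sum.inl (g i) ∧ G.Adj i (g i) := by
    intro i hi
    have hfi := hf i
    rw [ht] at hfi
    rcases Finset.mem_union.1 hfi with hx | hx
    · rcases Finset.mem_map.1 hx with ⟨j, hj, hji⟩
      simp only [Function.Embedding.inl_apply] at hji
      have hgi : g i = j := by rw [hg]; simp [← hji]
      rw [hgi]
      exact ⟨hji.symm, by simpa using hj⟩
    · rcases Finset.mem_map.1 hx with ⟨x0, _, hx0⟩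
      exfalso
      have : (f i).isLeft := by rw [hD] at hi; simpa using hi
      rw [← hx0] at this
      simp at this
  have hginj : ∀ i ∈ D, ∀ j ∈ D, g i = g j → i = j := by
    intro i hi j hj hgij
    apply hfinj
    rw [(hDadj i hi).1, (hDadj j hj).1, hgij]
  -- size of D
  have hRcard : (univ.filter (fun i => ¬ (f i).isLeft)).card ≤ d := by
    have : (univ.filter (fun i => ¬ (f i).isLeft)).card
        ≤ ((univ : Finset (Fin d)).map (Function.Embedding.inr : Fin d ↪ V ⊕ Fin d)).card := by
      refine Finset.card_le_card_of_injOn f (fun i hi => ?_) (hfinj.injOn)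
      have : ¬ (f i).isLeft := by simpa using (Finset.mem_filter.1 hi).2
      rcases Sum.isRight_iff.1 (Sum.not_isLeft.1 this) with ⟨y, hy⟩
      rw [hy]
      exact Finset.mem_map.2 ⟨y, Finset.mem_univ _, rfl⟩
    simpa using this
  have hDcard : Fintype.card V ≤ D.card + d := by
    have := Finset.card_filter_add_card_filter_not
      (s := (univ : Finset V)) (p := fun i => (f i).isLeft)
    rw [Finset.card_univ] at this
    rw [hD]
    omega
  -- the 2-matching
  refine ⟨fun e => (D.filter (fun i => s(i, g i) = e)).card, ⟨?_, ?_⟩, ?_⟩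
  · intro e he
    induction e with
    | h a b =>
      have hadj : G.Adj a b := he
      have hsub : D.filter (fun i => s(i, g i) = s(a, b)) ⊆ {a, b} := by
        intro i hi
        have := (Finset.mem_filter.1 hi).2
        rcases Sym2.eq_iff.1 this with ⟨h1, _⟩ | ⟨h1, _⟩ <;> simp [h1]
      calc (D.filter (fun i => s(i, g i) = s(a, b))).card
          ≤ ({a, b} : Finset V).card := Finset.card_le_card hsub
        _ ≤ 2 := Finset.card_insert_le a {b} |>.trans (by simp)
  · intro v
    rw [finsum_inc]
    have hfib : (D.filter (fun i => v = i ∨ v = g i)).card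
        = ∑ e ∈ G.edgeFinset.filter (fun e => v ∈ e),
            ((D.filter (fun i => v = i ∨ v = g i)).filter (fun i => s(i, g i) = e)).card := by
      refine Finset.card_eq_sum_card_fiberwise fun i hi => ?_
      rcases Finset.mem_filter.1 hi with ⟨hiD, hiv⟩
      exact Finset.mem_filter.2 ⟨SimpleGraph.mem_edgeFinset.2 (hDadj i hiD).2,
        Sym2.mem_iff.2 hiv⟩
    have heq : ∀ e ∈ G.edgeFinset.filter (fun e => v ∈ e),
        (D.filter (fun i => v = i ∨ v = g i)).filter (fun i => s(i, g i) = e)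
          = D.filter (fun i => s(i, g i) = e) := by
      intro e he
      have hv : v ∈ e := (Finset.mem_filter.1 he).2
      ext i
      simp only [Finset.mem_filter]
      constructor
      · rintro ⟨⟨h1, _⟩, h3⟩; exact ⟨h1, h3⟩
      · rintro ⟨h1, h3⟩
        refine ⟨⟨h1, ?_⟩, h3⟩
        rw [← h3] at hv
        exact Sym2.mem_iff.1 hv
    rw [Finset.sum_congr rfl fun e he => congrArg Finset.card (heq e he)] at hfib
    rw [← hfib]
    have hsplit : D.filter (fun i => v = i ∨ v = g i)
        = D.filter (fun i => v = i) ∪ D.filter (fun i => v = g i) :=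
      Finset.filter_or _ _ _
    have c1 : (D.filter (fun i => v = i)).card ≤ 1 := by
      refine Finset.card_le_one.2 fun a ha b hb => ?_
      have h1 := (Finset.mem_filter.1 ha).2
      have h2 := (Finset.mem_filter.1 hb).2
      rw [← h1, ← h2]
    have c2 : (D.filter (fun i => v = g i)).card ≤ 1 := by
      refine Finset.card_le_one.2 fun a ha b hb => ?_
      exact hginj a (Finset.mem_filter.1 ha).1 b (Finset.mem_filter.1 hb).1
        (((Finset.mem_filter.1 ha).2).symm.trans (Finset.mem_filter.1 hb).2)
    calc (D.filter (fun i => v = i ∨ v = g i)).card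
        ≤ (D.filter (fun i => v = i)).card + (D.filter (fun i => v = g i)).card := by
          rw [hsplit]; exact Finset.card_union_le _ _
      _ ≤ 2 := by omega
  · have htot : ∑ e ∈ G.edgeFinset, (D.filter (fun i => s(i, g i) = e)).card = D.card :=
      (Finset.card_eq_sum_card_fiberwise fun i hi =>
        SimpleGraph.mem_edgeFinset.2 (hDadj i hi).2).symm
    rw [htot]
    omega

end helpers

/-- For a finite simple undirected graph `G`, `ν₂(G) = τ₂(G) = |V| - ν̂_G`: the maximum size
of a 2-matching equals the minimum size of a 2-vertex cover, and both equal `|V|` minus the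
weak vulnerability `ν̂_G`; moreover `|V| - ν̂_G` is the minimum over independent sets `S` of
`|V| - |S| + |N(S)|`. -/
theorem max2Matching_eq_min2VertexCover_eq_card_sub_weakVulnerability
    [Fintype V] [DecidableEq V] (G : SimpleGraph V) [DecidableRel G.Adj]
    (nu2 tau2 : ℕ) (nuHat : ℤ)
    (h2m : IsGreatest {n : ℕ |
      ∃ w : Sym2 V → ℕ, IsTwoMatching G w ∧ ∑ᶠ e ∈ G.edgeSet, w e = n} nu2)
    (h2c : IsLeast {n : ℕ | ∃ u : V → ℕ, IsTwoVertexCover G u ∧ ∑ i, u i = n} tau2)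
    (hHat : IsGreatest {x : ℤ | ∃ T : Finset V, vuln G T = x} nuHat) :
    (nu2 : ℤ) = (tau2 : ℤ) ∧ (nu2 : ℤ) = (Fintype.card V : ℤ) - nuHat ∧
      IsLeast {x : ℤ | ∃ S : Finset V, IsIndepF G S ∧
          x = (Fintype.card V : ℤ) - (S.card : ℤ) + ((nbhd G S).card : ℤ)}
        ((Fintype.card V : ℤ) - nuHat) := by
  classical
  have hub : ∀ T : Finset V, vuln G T ≤ nuHat := fun T => hHat.2 ⟨T, rfl⟩
  have h0 : vuln G (∅ : Finset V) = 0 := by simp [vuln, nbhd_empty]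
  have hnn : 0 ≤ nuHat := h0 ▸ hub ∅
  obtain ⟨Sm, hSind, hSv⟩ := indep_maximizer G hHat.1 hub
  -- tau2 = card V - nuHat
  obtain ⟨u0, hu0, hsum0⟩ := h2c.1
  have htge : (Fintype.card V : ℤ) - nuHat ≤ (tau2 : ℤ) := by
    have := cover_ge G hu0 hub
    rwa [hsum0] at this
  obtain ⟨u1, hu1, hval⟩ := cover_exists G hSind
  have htle : (tau2 : ℤ) ≤ (Fintype.card V : ℤ) - nuHat := by
    have hm := h2c.2 ⟨u1, hu1, rfl⟩
    have := (Nat.cast_le (α := ℤ)).2 hm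
    rw [hval] at this
    rw [vuln] at hSv
    omega
  have htau : (tau2 : ℤ) = (Fintype.card V : ℤ) - nuHat := le_antisymm htle htge
  -- nu2 = card V - nuHat
  obtain ⟨w0, hw0, hsumw⟩ := h2m.1
  have hnle : (nu2 : ℤ) ≤ (Fintype.card V : ℤ) - nuHat := by
    have := matching_le G hw0 Sm
    rw [← finsum_edge, hsumw, hSv] at this
    exact this
  have hnge : (Fintype.card V : ℤ) - nuHat ≤ (nu2 : ℤ) := by
    obtain ⟨w1, hw1, hbound⟩ := matching_exists G hnn hub
    have hm := h2m.2 ⟨w1, hw1, finsum_edge G w1⟩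
    have := (Nat.cast_le (α := ℤ)).2 hm
    omega
  have hnu : (nu2 : ℤ) = (Fintype.card V : ℤ) - nuHat := le_antisymm hnle hnge
  refine ⟨by rw [hnu, htau], hnu, ⟨⟨Sm, hSind, ?_⟩, ?_⟩⟩
  · rw [vuln] at hSv; omega
  · rintro x ⟨S, hSi, rfl⟩
    have := hub S
    rw [vuln] at this
    omega
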